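/- Let α : V → W be a grade-preserving G-equivariant linear map between indecomposable objects, where V is supported on an orbit O ⊆ M with each V_s (s ∈ O) an irreducible stab(s)-representation, and similarly W on orbit O'. Then either α = 0, or O = O' and α is a nonzero scalar multiple of an isomorphism which on each graded component V_s is λ times a fixed identification; in particular if V = W then α is a scalar multiple of the identity. -/

import Mathlib

/-- Schur's lemma in the category `𝒞`: a grade-preserving `G`-equivariant
linear map `α : V → W` between indecomposable objects (each supported on a
single `⊳`-orbit, with irreducible stabilizer representation in each graded
component at the base point) is either zero, or the orbits coincide and `α`
is a nonzero scalar multiple of an isomorphism; in particular for `V = W` it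
is a scalar multiple of the identity. -/
theorem stmt16 {X : Type*} [Group X] [Fintype X] [DecidableEq X]
    (G : Subgroup X) (M : Set X)
    (hM1 : (1 : X) ∈ M)
    (huniq : ∀ u v s t : X, u ∈ G → v ∈ G → s ∈ M → t ∈ M → u * s = v * t → u = v ∧ s = t)
    (tr ta : X → X → X)
    (htr : ∀ s u : X, s ∈ M → u ∈ G → tr s u ∈ G)
    (hta : ∀ s u : X, s ∈ M → u ∈ G → ta s u ∈ M)
    (hfac : ∀ s u : X, s ∈ M → u ∈ G → s * u = tr s u * ta s u)
    {V W : Type*} [AddCommGroup V] [Module ℂ V] [FiniteDimensional ℂ V]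
    [AddCommGroup W] [Module ℂ W] [FiniteDimensional ℂ W]
    (VS : X → Submodule ℂ V) (hdV : DirectSum.IsInternal VS)
    (WS : X → Submodule ℂ W) (hdW : DirectSum.IsInternal WS)
    (ρV : X → V →ₗ[ℂ] V) (hρV1 : ρV 1 = LinearMap.id)
    (hρVm : ∀ u v : X, u ∈ G → v ∈ G → ρV (u * v) = (ρV v).comp (ρV u))
    (hcompatV : ∀ s u : X, s ∈ M → u ∈ G → ∀ ξ ∈ VS s, ρV u ξ ∈ VS (ta s u))
    (ρW : X → W →ₗ[ℂ] W) (hρW1 : ρW 1 = LinearMap.id)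
    (hρWm : ∀ u v : X, u ∈ G → v ∈ G → ρW (u * v) = (ρW v).comp (ρW u))
    (hcompatW : ∀ s u : X, s ∈ M → u ∈ G → ∀ η ∈ WS s, ρW u η ∈ WS (ta s u))
    -- `V` is indecomposable, supported on the orbit of `sV`:
    (sV : X) (hsV : sV ∈ M)
    (hsuppV : ∀ t : X, (¬ ∃ u ∈ G, ta sV u = t) → VS t = ⊥)
    (hneV : VS sV ≠ ⊥)
    (hirrV : ∀ U : Submodule ℂ V, U ≤ VS sV →
      (∀ w : X, w ∈ G → ta sV w = sV → ∀ ξ ∈ U, ρV w ξ ∈ U) → U = ⊥ ∨ U = VS sV)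
    -- `W` is indecomposable, supported on the orbit of `sW`:
    (sW : X) (hsW : sW ∈ M)
    (hsuppW : ∀ t : X, (¬ ∃ u ∈ G, ta sW u = t) → WS t = ⊥)
    (hneW : WS sW ≠ ⊥)
    (hirrW : ∀ U : Submodule ℂ W, U ≤ WS sW →
      (∀ w : X, w ∈ G → ta sW w = sW → ∀ η ∈ U, ρW w η ∈ U) → U = ⊥ ∨ U = WS sW)
    -- `α` is a morphism: grade-preserving and `G`-equivariant
    (α : V →ₗ[ℂ] W)
    (hgrade : ∀ t : X, ∀ ξ ∈ VS t, α ξ ∈ WS t)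
    (hequiv : ∀ u : X, u ∈ G → α.comp (ρV u) = (ρW u).comp α) :
    α = 0 ∨
      ({t : X | ∃ u ∈ G, ta sV u = t} = {t : X | ∃ u ∈ G, ta sW u = t} ∧
        ∃ c : ℂ, c ≠ 0 ∧ ∃ e : V ≃ₗ[ℂ] W, α = c • (e : V →ₗ[ℂ] W)) := by
  classical
  -- basic facts about the action `ta`
  have hta1 : ∀ s, s ∈ M → ta s 1 = s := by
    intro s hs
    have h := hfac s 1 hs (one_mem G)
    have h2 := huniq 1 (tr s 1) s (ta s 1) (one_mem G) (htr s 1 hs (one_mem G)) hs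
      (hta s 1 hs (one_mem G)) (by rw [one_mul, ← h, mul_one])
    exact h2.2.symm
  have htamul : ∀ s u v, s ∈ M → u ∈ G → v ∈ G → ta (ta s u) v = ta s (u * v) := by
    intro s u v hs hu hv
    have h1 := hfac s u hs hu
    have h2 := hfac (ta s u) v (hta s u hs hu) hv
    have h3 := hfac s (u * v) hs (mul_mem hu hv)
    have key : tr s (u * v) * ta s (u * v) = (tr s u * tr (ta s u) v) * ta (ta s u) v := by
      rw [← h3, ← mul_assoc, h1, mul_assoc, h2, mul_assoc]
    have h4 := huniq (tr s (u * v)) (tr s u * tr (ta s u) v) (ta s (u * v)) (ta (ta s u) v)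
      (htr s (u * v) hs (mul_mem hu hv))
      (mul_mem (htr s u hs hu) (htr (ta s u) v (hta s u hs hu) hv))
      (hta s (u * v) hs (mul_mem hu hv)) (hta (ta s u) v (hta s u hs hu) hv) key
    exact h4.2.symm
  -- inverses of the representations
  have hρVi2 : ∀ u, u ∈ G → ∀ x : V, ρV u (ρV u⁻¹ x) = x := by
    intro u hu x
    have h := hρVm u⁻¹ u (inv_mem hu) hu
    rw [inv_mul_cancel, hρV1] at h
    have := LinearMap.ext_iff.1 h x
    simpa using this.symm
  have hρWi2 : ∀ u, u ∈ G → ∀ x : W, ρW u (ρW u⁻¹ x) = x := by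
    intro u hu x
    have h := hρWm u⁻¹ u (inv_mem hu) hu
    rw [inv_mul_cancel, hρW1] at h
    have := LinearMap.ext_iff.1 h x
    simpa using this.symm
  -- pointwise equivariance
  have heq : ∀ u, u ∈ G → ∀ x : V, α (ρV u x) = ρW u (α x) := by
    intro u hu x
    have := LinearMap.ext_iff.1 (hequiv u hu) x
    simpa using this
  -- the kernel of α on the base component of V
  set K : Submodule ℂ V := VS sV ⊓ LinearMap.ker α with hKdef
  have hKle : K ≤ VS sV := inf_le_left
  have hKinv : ∀ w, w ∈ G → ta sV w = sV → ∀ ξ ∈ K, ρV w ξ ∈ K := by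
    intro w hw hws ξ hξ
    obtain ⟨h1, h2⟩ := Submodule.mem_inf.1 hξ
    refine Submodule.mem_inf.2 ⟨?_, ?_⟩
    · have := hcompatV sV w hsV hw ξ h1
      rwa [hws] at this
    · refine LinearMap.mem_ker.2 ?_
      rw [heq w hw ξ, LinearMap.mem_ker.1 h2, map_zero]
  rcases hirrV K hKle hKinv with hK0 | hKall
  · -- α is injective on the base component: nonzero case
    have hinj0 : ∀ ξ ∈ VS sV, α ξ = 0 → ξ = 0 := by
      intro ξ h1 h2
      have hm : ξ ∈ K := Submodule.mem_inf.2 ⟨h1, LinearMap.mem_ker.2 h2⟩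
      rw [hK0] at hm
      simpa using hm
    obtain ⟨ξ₀, hξ₀V, hξ₀⟩ := (Submodule.ne_bot_iff _).1 hneV
    have hαξ₀ : α ξ₀ ≠ 0 := fun h => hξ₀ (hinj0 ξ₀ hξ₀V h)
    have hWsV : WS sV ≠ ⊥ := by
      intro h
      have hm : α ξ₀ ∈ WS sV := hgrade sV ξ₀ hξ₀V
      rw [h] at hm
      exact hαξ₀ (by simpa using hm)
    obtain ⟨u₀, hu₀G, hu₀⟩ : ∃ u ∈ G, ta sW u = sV := by
      by_contra h; exact hWsV (hsuppW sV h)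
    have hsWV : ta sV u₀⁻¹ = sW := by
      rw [← hu₀, htamul sW u₀ u₀⁻¹ hsW hu₀G (inv_mem hu₀G), mul_inv_cancel, hta1 sW hsW]
    -- the two orbits coincide
    have horbeq : {t : X | ∃ u ∈ G, ta sV u = t} = {t : X | ∃ u ∈ G, ta sW u = t} := by
      ext t
      constructor
      · rintro ⟨u, hu, rfl⟩
        exact ⟨u₀ * u, mul_mem hu₀G hu, by rw [← htamul sW u₀ u hsW hu₀G hu, hu₀]⟩
      · rintro ⟨u, hu, rfl⟩
        exact ⟨u₀⁻¹ * u, mul_mem (inv_mem hu₀G) hu,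
          by rw [← htamul sV u₀⁻¹ u hsV (inv_mem hu₀G) hu, hsWV]⟩
    -- α maps the base component of V onto the component WS sV
    have hRle : Submodule.map α (VS sV) ≤ WS sV := by
      rintro y ⟨ξ, hξ, rfl⟩; exact hgrade sV ξ hξ
    set U : Submodule ℂ W := Submodule.map (ρW u₀⁻¹) (Submodule.map α (VS sV)) with hUdef
    have hUle : U ≤ WS sW := by
      rintro y ⟨η, hη, rfl⟩
      have hη' : η ∈ WS sV := hRle hη
      have := hcompatW sV u₀⁻¹ hsV (inv_mem hu₀G) η hη'
      rwa [hsWV] at this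
    have hUinv : ∀ w, w ∈ G → ta sW w = sW → ∀ η ∈ U, ρW w η ∈ U := by
      intro w hw hws y hy
      obtain ⟨η, hη, rfl⟩ := hy
      obtain ⟨ξ, hξ, rfl⟩ := hη
      have hw'G : u₀⁻¹ * w * u₀ ∈ G := mul_mem (mul_mem (inv_mem hu₀G) hw) hu₀G
      have hw'stab : ta sV (u₀⁻¹ * w * u₀) = sV := by
        rw [← htamul sV (u₀⁻¹ * w) u₀ hsV (mul_mem (inv_mem hu₀G) hw) hu₀G,
          ← htamul sV u₀⁻¹ w hsV (inv_mem hu₀G) hw, hsWV, hws, hu₀]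
      have hcomm : ρW w (ρW u₀⁻¹ (α ξ)) = ρW u₀⁻¹ (α (ρV (u₀⁻¹ * w * u₀) ξ)) := by
        have e1 : ρW (u₀⁻¹ * w) (α ξ) = ρW w (ρW u₀⁻¹ (α ξ)) := by
          rw [hρWm u₀⁻¹ w (inv_mem hu₀G) hw]; rfl
        have e2 : ρW ((u₀⁻¹ * w * u₀) * u₀⁻¹) (α ξ) = ρW u₀⁻¹ (ρW (u₀⁻¹ * w * u₀) (α ξ)) := by
          rw [hρWm (u₀⁻¹ * w * u₀) u₀⁻¹ hw'G (inv_mem hu₀G)]; rfl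
        calc ρW w (ρW u₀⁻¹ (α ξ)) = ρW (u₀⁻¹ * w) (α ξ) := e1.symm
        _ = ρW ((u₀⁻¹ * w * u₀) * u₀⁻¹) (α ξ) := by
              rw [show (u₀⁻¹ * w * u₀) * u₀⁻¹ = u₀⁻¹ * w by group]
        _ = ρW u₀⁻¹ (ρW (u₀⁻¹ * w * u₀) (α ξ)) := e2
        _ = ρW u₀⁻¹ (α (ρV (u₀⁻¹ * w * u₀) ξ)) := by rw [heq (u₀⁻¹ * w * u₀) hw'G ξ]
      rw [hcomm]
      refine ⟨α (ρV (u₀⁻¹ * w * u₀) ξ), ⟨ρV (u₀⁻¹ * w * u₀) ξ, ?_, rfl⟩, rfl⟩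
      have := hcompatV sV (u₀⁻¹ * w * u₀) hsV hw'G ξ hξ
      rwa [hw'stab] at this
    have hUne : U ≠ ⊥ := by
      intro h
      have hmem : ρW u₀⁻¹ (α ξ₀) ∈ U := ⟨α ξ₀, ⟨ξ₀, hξ₀V, rfl⟩, rfl⟩
      rw [h] at hmem
      simp only [Submodule.mem_bot] at hmem
      apply hαξ₀
      calc α ξ₀ = ρW u₀ (ρW u₀⁻¹ (α ξ₀)) := (hρWi2 u₀ hu₀G _).symm
      _ = 0 := by rw [hmem, map_zero]
    have hUeq : U = WS sW := (hirrW U hUle hUinv).resolve_left hUne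
    have hsurj0 : ∀ η ∈ WS sV, ∃ ξ ∈ VS sV, α ξ = η := by
      intro η hη
      have h1 : ρW u₀⁻¹ η ∈ WS sW := by
        have := hcompatW sV u₀⁻¹ hsV (inv_mem hu₀G) η hη
        rwa [hsWV] at this
      rw [← hUeq] at h1
      obtain ⟨η', ⟨ξ, hξ, rfl⟩, h2⟩ := h1
      refine ⟨ξ, hξ, ?_⟩
      have h3 : ρW u₀ (ρW u₀⁻¹ (α ξ)) = ρW u₀ (ρW u₀⁻¹ η) := by rw [h2]
      rwa [hρWi2 u₀ hu₀G, hρWi2 u₀ hu₀G] at h3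
    -- each graded component of α is bijective
    have hbij : ∀ t, Function.Bijective (α.restrict (hgrade t) : VS t →ₗ[ℂ] WS t) := by
      intro t
      by_cases horb : ∃ u ∈ G, ta sV u = t
      · obtain ⟨u, hu, rfl⟩ := horb
        have htM : ta sV u ∈ M := hta sV u hsV hu
        have hback : ta (ta sV u) u⁻¹ = sV := by
          rw [htamul sV u u⁻¹ hsV hu (inv_mem hu), mul_inv_cancel, hta1 sV hsV]
        constructor
        · rw [injective_iff_map_eq_zero]
          intro x hx
          have hx0 : α (x : V) = 0 := by
            have := congrArg (Subtype.val) hx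
            simpa [LinearMap.restrict_apply] using this
          have h1 : ρV u⁻¹ (x : V) ∈ VS sV := by
            have := hcompatV (ta sV u) u⁻¹ htM (inv_mem hu) (x : V) x.2
            rwa [hback] at this
          have h2 : α (ρV u⁻¹ (x : V)) = 0 := by
            rw [heq u⁻¹ (inv_mem hu) (x : V), hx0, map_zero]
          have h3 : ρV u⁻¹ (x : V) = 0 := hinj0 _ h1 h2
          have h4 : (x : V) = 0 := by
            calc (x : V) = ρV u (ρV u⁻¹ (x : V)) := (hρVi2 u hu _).symm
            _ = 0 := by rw [h3, map_zero]
          exact Subtype.ext h4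
        · rintro ⟨y, hy⟩
          have h1 : ρW u⁻¹ y ∈ WS sV := by
            have := hcompatW (ta sV u) u⁻¹ htM (inv_mem hu) y hy
            rwa [hback] at this
          obtain ⟨ξ, hξ, hαξ⟩ := hsurj0 _ h1
          have hxin : ρV u ξ ∈ VS (ta sV u) := hcompatV sV u hsV hu ξ hξ
          refine ⟨⟨ρV u ξ, hxin⟩, ?_⟩
          apply Subtype.ext
          rw [LinearMap.restrict_apply]
          calc α (ρV u ξ) = ρW u (α ξ) := heq u hu ξ
          _ = ρW u (ρW u⁻¹ y) := by rw [hαξ]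
          _ = y := hρWi2 u hu y
      · have hVbot : VS t = ⊥ := hsuppV t horb
        have hWbot : WS t = ⊥ := by
          apply hsuppW t
          intro h
          apply horb
          have hm : t ∈ {t : X | ∃ u ∈ G, ta sW u = t} := h
          rw [← horbeq] at hm
          exact hm
        constructor
        · intro a b _
          apply Subtype.ext
          have ha := (Submodule.mem_bot ℂ).1 (hVbot.le a.2)
          have hb := (Submodule.mem_bot ℂ).1 (hVbot.le b.2)
          rw [ha, hb]
        · intro y
          refine ⟨0, ?_⟩
          have hy := (Submodule.mem_bot ℂ).1 (hWbot.le y.2)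
          apply Subtype.ext
          rw [map_zero]
          exact (by simp [hy] : ((0 : WS t) : W) = (y : W))
    -- assemble a global linear equivalence out of the componentwise bijections
    let g : ∀ t : X, (VS t) ≃ₗ[ℂ] (WS t) :=
      fun t => LinearEquiv.ofBijective (α.restrict (hgrade t)) (hbij t)
    let E : DirectSum X (fun t => ↥(VS t)) ≃ₗ[ℂ] DirectSum X (fun t => ↥(WS t)) := DFinsupp.mapRange.linearEquiv g
    let DV : DirectSum X (fun t => ↥(VS t)) ≃ₗ[ℂ] V := LinearEquiv.ofBijective (DirectSum.coeLinearMap VS) hdV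
    let DW : DirectSum X (fun t => ↥(WS t)) ≃ₗ[ℂ] W := LinearEquiv.ofBijective (DirectSum.coeLinearMap WS) hdW
    let e : V ≃ₗ[ℂ] W := (DV.symm.trans E).trans DW
    have hkey : ∀ d : DirectSum X (fun t => ↥(VS t)),
        α (DirectSum.coeLinearMap VS d) = DirectSum.coeLinearMap WS (E d) := by
      intro d
      induction d using DirectSum.induction_on with
      | zero => simp
      | of t x =>
          rw [DirectSum.coeLinearMap_of]
          have hE : E (DirectSum.of (fun t => VS t) t x)
              = DirectSum.of (fun t => WS t) t (g t x) := by
            show DFinsupp.mapRange (fun i x => g i x) (fun i => (g i).map_zero)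
                (DFinsupp.single t x) = DFinsupp.single t (g t x)
            rw [DFinsupp.mapRange_single]
          rw [hE, DirectSum.coeLinearMap_of]
          rfl
      | add a b ha hb => simp [map_add, ha, hb]
    have hae : ∀ x : V, α x = e x := by
      intro x
      obtain ⟨d, rfl⟩ : ∃ d, DirectSum.coeLinearMap VS d = x :=
        ⟨DV.symm x, DV.apply_symm_apply x⟩
      have h5 : e (DirectSum.coeLinearMap VS d) = DirectSum.coeLinearMap WS (E d) := by
        show DW (E (DV.symm (DV d))) = _
        rw [DV.symm_apply_apply]
        rfl
      rw [h5]
      exact hkey d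
    refine Or.inr ⟨horbeq, 1, one_ne_zero, e, ?_⟩
    ext x
    simp only [LinearMap.smul_apply, one_smul, LinearEquiv.coe_coe]
    exact hae x
  · -- α vanishes on the base component: zero case
    left
    have hz : ∀ t, ∀ ξ ∈ VS t, α ξ = 0 := by
      intro t ξ hξ
      by_cases horb : ∃ u ∈ G, ta sV u = t
      · obtain ⟨u, hu, rfl⟩ := horb
        have htM : ta sV u ∈ M := hta sV u hsV hu
        have hback : ta (ta sV u) u⁻¹ = sV := by
          rw [htamul sV u u⁻¹ hsV hu (inv_mem hu), mul_inv_cancel, hta1 sV hsV]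
        have h1 : ρV u⁻¹ ξ ∈ VS sV := by
          have := hcompatV (ta sV u) u⁻¹ htM (inv_mem hu) ξ hξ
          rwa [hback] at this
        have h2 : α (ρV u⁻¹ ξ) = 0 := by
          have hm : ρV u⁻¹ ξ ∈ K := by rw [hKall]; exact h1
          exact LinearMap.mem_ker.1 (Submodule.mem_inf.1 hm).2
        calc α ξ = α (ρV u (ρV u⁻¹ ξ)) := by rw [hρVi2 u hu]
        _ = ρW u (α (ρV u⁻¹ ξ)) := heq u hu _
        _ = 0 := by rw [h2, map_zero]
      · have hbot : VS t = ⊥ := hsuppV t horb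
        rw [hbot] at hξ
        simp only [Submodule.mem_bot] at hξ
        rw [hξ, map_zero]
    ext x
    have hx : x ∈ ⨆ t, VS t := by rw [hdV.submodule_iSup_eq_top]; trivial
    simp only [LinearMap.zero_apply]
    exact Submodule.iSup_induction (motive := fun y => α y = 0) VS hx (fun t ξ hξ => hz t ξ hξ)
      (map_zero α) (fun a b ha hb => by show α (a + b) = 0; rw [map_add, show α a = 0 from ha, show α b = 0 from hb, add_zero])
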